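/- Aggregated gradient-noise bound (step in the proof of Lemma C.1). In one round of parallel local SGD with N clients, τ steps, step size η ≥ 0 and common initial point x⁰, one has 𝔼[‖∑_{n=1}^N a_n ∑_{i=0}^{τ−1} (g_n(X_{n,i}, ω_{n,i}) − ∇F_n(X_{n,i}))‖²] ≤ N·τ²·∑_{n=1}^N a_n²·σ_n². No restriction on η beyond η ≥ 0 is needed. -/

import Mathlib

open MeasureTheory Function
open scoped RealInnerProductSpace
open scoped ENNReal

noncomputable section

namespace SGDAux

section Basic

variable {E : Type*} [NormedAddCommGroup E] [NormedSpace ℝ E]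

/-- SGD trajectory started at (absolute) step `s` from point `x`; steps before `s` do nothing. -/
def trajA {Z : Type*} (G : E → Z → E) (η : ℝ) (τ : ℕ) (s : ℕ) (x : E) : ℕ → (Fin τ → Z) → E
  | 0, _ => x
  | (j + 1), y =>
      if h : s ≤ j ∧ j < τ then
        trajA G η τ s x j y - η • G (trajA G η τ s x j y) (y ⟨j, h.2⟩)
      else trajA G η τ s x j y

theorem trajA_of_le {Z : Type*} (G : E → Z → E) (η : ℝ) (τ : ℕ) (s : ℕ) (x : E)
    {j : ℕ} (hj : j ≤ s) (y : Fin τ → Z) : trajA G η τ s x j y = x := by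
  induction j with
  | zero => rfl
  | succ j ih =>
      have h1 : ¬(s ≤ j ∧ j < τ) := fun h => absurd hj (by omega)
      rw [trajA, dif_neg h1, ih (by omega)]

theorem trajA_shift {Z : Type*} (G : E → Z → E) (η : ℝ) (τ : ℕ) (s : ℕ) (x : E)
    (hs : s < τ) (z : Z) (y : Fin τ → Z) :
    ∀ j, s + 1 ≤ j →
      trajA G η τ s x j (Function.update y ⟨s, hs⟩ z)
        = trajA G η τ (s + 1) (x - η • G x z) j y := by
  intro j hj
  induction j with
  | zero => omega
  | succ j ih =>
      by_cases hj' : s + 1 ≤ j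
      · have hij := ih hj'
        by_cases hlt : j < τ
        · rw [trajA, dif_pos ⟨by omega, hlt⟩, trajA, dif_pos ⟨hj', hlt⟩, hij]
          have hne : (⟨j, hlt⟩ : Fin τ) ≠ ⟨s, hs⟩ := by
            simp only [ne_eq, Fin.mk.injEq]; omega
          rw [Function.update_of_ne hne]
        · rw [trajA, dif_neg (fun h => hlt h.2), trajA, dif_neg (fun h => hlt h.2), hij]
      · -- j + 1 = s + 1, i.e. j = s
        have hjs : j = s := by omega
        subst hjs
        rw [trajA, dif_pos ⟨le_refl _, hs⟩, trajA_of_le _ _ _ _ _ (le_refl _),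
          trajA_of_le _ _ _ _ _ (by omega), Function.update_self]

theorem norm_sum_sq_le {ι : Type*} (s : Finset ι) (v : ι → E) :
    ‖∑ i ∈ s, v i‖ ^ 2 ≤ (s.card : ℝ) * ∑ i ∈ s, ‖v i‖ ^ 2 := by
  calc ‖∑ i ∈ s, v i‖ ^ 2 ≤ (∑ i ∈ s, ‖v i‖) ^ 2 := by
        have h1 := norm_sum_le s v
        have h2 : (0:ℝ) ≤ ‖∑ i ∈ s, v i‖ := norm_nonneg _
        nlinarith
    _ ≤ (s.card : ℝ) * ∑ i ∈ s, ‖v i‖ ^ 2 := sq_sum_le_card_mul_sum_sq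

theorem sqrt_le_one_add (t : ℝ) : Real.sqrt t ≤ 1 + |t| := by
  rcases le_or_gt t 0 with h | h
  · have : Real.sqrt t = 0 := Real.sqrt_eq_zero'.2 h
    rw [this]
    positivity
  · have habs : |t| = t := abs_of_pos h
    nlinarith [Real.sq_sqrt h.le, Real.sqrt_nonneg t]

/-- Cauchy–Schwarz: the integral of `√I` is at most `√(∫ I)`, for probability measures. -/
theorem integral_sqrt_le {α : Type*} [MeasurableSpace α] (μ : Measure α)
    [IsProbabilityMeasure μ] {I : α → ℝ} (hI : Integrable I μ) (h0 : 0 ≤ᵐ[μ] I) :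
    ∫ z, Real.sqrt (I z) ∂μ ≤ Real.sqrt (∫ z, I z ∂μ) := by
  have hsm : AEStronglyMeasurable (fun z => Real.sqrt (I z)) μ :=
    Real.continuous_sqrt.comp_aestronglyMeasurable hI.aestronglyMeasurable
  have hsint : Integrable (fun z => Real.sqrt (I z)) μ := by
    refine Integrable.mono' ((integrable_const (1:ℝ)).add hI.abs) hsm ?_
    filter_upwards with z
    rw [Real.norm_eq_abs, abs_of_nonneg (Real.sqrt_nonneg _)]
    exact sqrt_le_one_add _
  set t := ∫ z, Real.sqrt (I z) ∂μ with ht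
  have ht0 : 0 ≤ t := integral_nonneg fun z => Real.sqrt_nonneg _
  have hIint : 0 ≤ ∫ z, I z ∂μ := integral_nonneg_of_ae h0
  rw [Real.le_sqrt ht0 hIint]
  have hexp : ∫ z, (Real.sqrt (I z) - t) ^ 2 ∂μ = (∫ z, I z ∂μ) - t ^ 2 := by
    have hcong : (fun z => (Real.sqrt (I z) - t) ^ 2)
        =ᵐ[μ] fun z => I z - (2 * t) * Real.sqrt (I z) + t ^ 2 := by
      filter_upwards [h0] with z hz
      have := Real.sq_sqrt hz
      ring_nf
      nlinarith [Real.sq_sqrt hz]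
    rw [integral_congr_ae hcong,
      integral_add (f := fun z => I z - 2 * t * Real.sqrt (I z)) (g := fun _ => t ^ 2)
        (hI.sub (hsint.const_mul (2*t))) (integrable_const _),
      integral_sub (f := I) (g := fun z => 2 * t * Real.sqrt (I z)) hI (hsint.const_mul (2*t)),
      integral_const_mul, integral_const]
    simp only [measure_univ, probReal_univ, ENNReal.toReal_one, one_smul, smul_eq_mul]
    rw [← ht]
    ring
  have hnn : 0 ≤ ∫ z, (Real.sqrt (I z) - t) ^ 2 ∂μ := integral_nonneg fun z => sq_nonneg _
  linarith

/-- Overwriting one coordinate of a product with a fresh independent sample preserves the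
product measure. -/
theorem measurePreserving_updateCoord {Z : Type*} [MeasurableSpace Z] (ν : Measure Z)
    [IsProbabilityMeasure ν] {τ : ℕ} (s : Fin τ) :
    MeasurePreserving (fun p : Z × (Fin τ → Z) => Function.update p.2 s p.1)
      (ν.prod (Measure.pi fun _ : Fin τ => ν)) (Measure.pi fun _ : Fin τ => ν) := by
  have hm : Measurable fun p : Z × (Fin τ → Z) => Function.update p.2 s p.1 := by
    apply measurable_pi_lambda
    intro i
    by_cases h : i = s
    · subst h; simpa only [Function.update_self] using measurable_fst
    · simp only [Function.update_of_ne h]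
      exact (measurable_pi_apply i).comp measurable_snd
  refine ⟨hm, ?_⟩
  refine (Measure.pi_eq fun C hC => ?_).symm
  rw [Measure.map_apply hm (MeasurableSet.univ_pi hC)]
  have hpre : (fun p : Z × (Fin τ → Z) => Function.update p.2 s p.1) ⁻¹' Set.pi Set.univ C
      = (C s) ×ˢ Set.pi Set.univ (Function.update C s Set.univ) := by
    ext ⟨z, y⟩
    simp only [Set.mem_preimage, Set.mem_pi, Set.mem_univ, forall_true_left, Set.mem_prod]
    constructor
    · intro h
      refine ⟨by simpa only [Function.update_self] using h s, fun i => ?_⟩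
      by_cases hi : i = s
      · subst hi; simp
      · have := h i
        rw [Function.update_of_ne hi] at this ⊢
        exact this
    · rintro ⟨h1, h2⟩ i
      by_cases hi : i = s
      · subst hi; simpa only [Function.update_self] using h1
      · have := h2 i
        rw [Function.update_of_ne hi] at this ⊢
        exact this
  rw [hpre, Measure.prod_prod, Measure.pi_pi]
  have hupd : ∀ i, ν (Function.update C s Set.univ i) = Function.update (fun j => ν (C j)) s 1 i := by
    intro i; by_cases hi : i = s
    · subst hi; simp
    · rw [Function.update_of_ne hi, Function.update_of_ne hi]
  rw [Finset.prod_congr rfl fun i _ => hupd i,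
    Finset.prod_update_of_mem (Finset.mem_univ s), one_mul, ← Finset.erase_eq,
    ← Finset.mul_prod_erase Finset.univ _ (Finset.mem_univ s)]

/-- Overwriting one inner coordinate of one block of a product-of-products with a fresh
independent sample preserves the measure. -/
theorem measurePreserving_updateCell {N : ℕ} {Z : Fin N → Type*} [∀ n, MeasurableSpace (Z n)]
    (ν : ∀ n, Measure (Z n)) [∀ n, IsProbabilityMeasure (ν n)] {τ : ℕ} (n₀ : Fin N) (s : Fin τ) :
    MeasurePreserving
      (fun p : Z n₀ × (∀ n, Fin τ → Z n) =>
        Function.update p.2 n₀ (Function.update (p.2 n₀) s p.1))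
      ((ν n₀).prod (Measure.pi fun n => Measure.pi fun _ : Fin τ => ν n))
      (Measure.pi fun n => Measure.pi fun _ : Fin τ => ν n) := by
  classical
  have hψ : Measurable fun p : Z n₀ × (Fin τ → Z n₀) => Function.update p.2 s p.1 :=
    (measurePreserving_updateCoord (ν n₀) s).measurable
  have hm : Measurable (fun p : Z n₀ × (∀ n, Fin τ → Z n) =>
      Function.update p.2 n₀ (Function.update (p.2 n₀) s p.1)) := by
    apply measurable_pi_lambda
    intro n
    by_cases h : n = n₀
    · subst h
      simp only [Function.update_self]
      exact hψ.comp (measurable_fst.prodMk ((measurable_pi_apply n).comp measurable_snd))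
    · simp only [Function.update_of_ne h]
      exact (measurable_pi_apply n).comp measurable_snd
  refine ⟨hm, ?_⟩
  refine (Measure.pi_eq fun B hB => ?_).symm
  rw [Measure.map_apply hm (MeasurableSet.univ_pi hB),
    Measure.prod_apply (hm (MeasurableSet.univ_pi hB))]
  have hsec : ∀ z : Z n₀,
      (Prod.mk z ⁻¹' ((fun p : Z n₀ × (∀ n, Fin τ → Z n) =>
          Function.update p.2 n₀ (Function.update (p.2 n₀) s p.1)) ⁻¹' Set.pi Set.univ B))
        = Set.pi Set.univ
            (Function.update B n₀ ((fun y => Function.update y s z) ⁻¹' B n₀)) := by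
    intro z
    ext ω
    simp only [Set.mem_preimage, Set.mem_pi, Set.mem_univ, forall_true_left]
    constructor
    · intro h n
      by_cases hn : n = n₀
      · subst hn
        rw [Function.update_self]
        have := h n
        rwa [Function.update_self] at this
      · have := h n
        rw [Function.update_of_ne hn] at this ⊢
        exact this
    · intro h n
      by_cases hn : n = n₀
      · subst hn
        rw [Function.update_self]
        have := h n
        rwa [Function.update_self] at this
      · have := h n
        rw [Function.update_of_ne hn] at this ⊢
        exact this
  have hmeasC : ∀ z : Z n₀,
      MeasurableSet ((fun y : Fin τ → Z n₀ => Function.update y s z) ⁻¹' B n₀) :=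
    fun z => measurable_update_left (hB n₀)
  simp_rw [hsec]
  have hval : ∀ z : Z n₀,
      (Measure.pi fun n => Measure.pi fun _ : Fin τ => ν n)
          (Set.pi Set.univ
            (Function.update B n₀ ((fun y => Function.update y s z) ⁻¹' B n₀)))
        = (Measure.pi fun _ : Fin τ => ν n₀)
              ((fun y => Function.update y s z) ⁻¹' B n₀)
            * ∏ n ∈ Finset.univ.erase n₀, (Measure.pi fun _ : Fin τ => ν n) (B n) := by
    intro z
    rw [Measure.pi_pi]
    have hupd : ∀ n, (Measure.pi fun _ : Fin τ => ν n)
        (Function.update B n₀ ((fun y => Function.update y s z) ⁻¹' B n₀) n)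
        = Function.update (fun m => (Measure.pi fun _ : Fin τ => ν m) (B m)) n₀
            ((Measure.pi fun _ : Fin τ => ν n₀) ((fun y => Function.update y s z) ⁻¹' B n₀)) n := by
      intro n
      by_cases hn : n = n₀
      · subst hn; simp
      · rw [Function.update_of_ne hn, Function.update_of_ne hn]
    rw [Finset.prod_congr rfl fun n _ => hupd n,
      Finset.prod_update_of_mem (Finset.mem_univ n₀), ← Finset.erase_eq]
  simp_rw [hval]
  have hmeasfn : Measurable fun z : Z n₀ =>
      (Measure.pi fun _ : Fin τ => ν n₀) ((fun y => Function.update y s z) ⁻¹' B n₀) := by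
    have h1 : Measurable fun z : Z n₀ =>
        (Measure.pi fun _ : Fin τ => ν n₀)
          (Prod.mk z ⁻¹' ((fun p : Z n₀ × (Fin τ → Z n₀) =>
            Function.update p.2 s p.1) ⁻¹' B n₀)) :=
      measurable_measure_prodMk_left (hψ (hB n₀))
    exact h1
  rw [lintegral_mul_const _ hmeasfn]
  have hint : (∫⁻ z, (Measure.pi fun _ : Fin τ => ν n₀)
      ((fun y => Function.update y s z) ⁻¹' B n₀) ∂ν n₀)
        = (Measure.pi fun _ : Fin τ => ν n₀) (B n₀) := by
    have h2 : (∫⁻ z, (Measure.pi fun _ : Fin τ => ν n₀)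
        ((fun y => Function.update y s z) ⁻¹' B n₀) ∂ν n₀)
        = ((ν n₀).prod (Measure.pi fun _ : Fin τ => ν n₀))
            ((fun p : Z n₀ × (Fin τ → Z n₀) => Function.update p.2 s p.1) ⁻¹' B n₀) := by
      rw [Measure.prod_apply (hψ (hB n₀))]
      rfl
    rw [h2, ← Measure.map_apply hψ (hB n₀),
      (measurePreserving_updateCoord (ν n₀) s).map_eq]
  rw [hint, ← Finset.mul_prod_erase Finset.univ _ (Finset.mem_univ n₀)]

end Basic

universe uZ

/-- The squared norm of offset plus weighted tail sums of SGD noise. -/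
def fval {N : ℕ} {Z : Fin N → Type uZ} {E : Type*} [NormedAddCommGroup E] [NormedSpace ℝ E]
    (G : ∀ n, E → Z n → E) (D : Fin N → E → E) (a : Fin N → ℝ) (η : ℝ) (τ : ℕ)
    (start : Fin N → ℕ) (x : Fin N → E) (v : E) (ω : ∀ n, Fin τ → Z n) : ℝ :=
  ‖v + ∑ n, a n • ∑ i ∈ Finset.univ.filter (fun i : Fin τ => start n ≤ (i : ℕ)),
      (G n (trajA (G n) η τ (start n) (x n) (i : ℕ) (ω n)) (ω n i)
        - D n (trajA (G n) η τ (start n) (x n) (i : ℕ) (ω n)))‖ ^ 2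

theorem fval_nonneg {N : ℕ} {Z : Fin N → Type*} {E : Type*} [NormedAddCommGroup E]
    [NormedSpace ℝ E] (G : ∀ n, E → Z n → E) (D : Fin N → E → E) (a : Fin N → ℝ) (η : ℝ) (τ : ℕ)
    (start : Fin N → ℕ) (x : Fin N → E) (v : E) (ω : ∀ n, Fin τ → Z n) :
    0 ≤ fval G D a η τ start x v ω :=
  pow_nonneg (norm_nonneg _) 2

theorem fval_update {N : ℕ} {Z : Fin N → Type*} {E : Type*} [NormedAddCommGroup E]
    [NormedSpace ℝ E] (G : ∀ n, E → Z n → E) (D : Fin N → E → E) (a : Fin N → ℝ) (η : ℝ) (τ : ℕ)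
    (start : Fin N → ℕ) (x : Fin N → E) (v : E)
    (n₀ : Fin N) (hn₀ : start n₀ < τ) (z : Z n₀) (ω : ∀ n, Fin τ → Z n) :
    fval G D a η τ start x v
        (Function.update ω n₀ (Function.update (ω n₀) ⟨start n₀, hn₀⟩ z))
      = fval G D a η τ (Function.update start n₀ (start n₀ + 1))
          (Function.update x n₀ (x n₀ - η • G n₀ (x n₀) z))
          (v + a n₀ • (G n₀ (x n₀) z - D n₀ (x n₀))) ω := by
  classical
  set s₀ := start n₀ with hs₀
  set cell : Fin τ := ⟨s₀, hn₀⟩ with hcell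
  set x₀ := x n₀ with hx₀
  set w₀ : E := G n₀ x₀ z - D n₀ x₀ with hw₀
  set T : Fin N → E := fun n =>
    ∑ i ∈ Finset.univ.filter (fun i : Fin τ => start n ≤ (i : ℕ)),
      (G n (trajA (G n) η τ (start n) (x n)
          (i : ℕ) ((Function.update ω n₀ (Function.update (ω n₀) cell z)) n))
        (((Function.update ω n₀ (Function.update (ω n₀) cell z)) n) i)
        - D n (trajA (G n) η τ (start n) (x n)
          (i : ℕ) ((Function.update ω n₀ (Function.update (ω n₀) cell z)) n))) with hT
  set start' := Function.update start n₀ (s₀ + 1) with hstart'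
  set x' := Function.update x n₀ (x₀ - η • G n₀ x₀ z) with hx'
  set T' : Fin N → E := fun n =>
    ∑ i ∈ Finset.univ.filter (fun i : Fin τ => start' n ≤ (i : ℕ)),
      (G n (trajA (G n) η τ (start' n) (x' n) (i : ℕ) (ω n)) (ω n i)
        - D n (trajA (G n) η τ (start' n) (x' n) (i : ℕ) (ω n))) with hT'
  have hTne : ∀ n, n ≠ n₀ → T n = T' n := by
    intro n hn
    rw [hT, hT']
    simp only [hstart', hx', Function.update_of_ne hn]
  have hTn₀ : T n₀ = w₀ + T' n₀ := by
    rw [hT, hT']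
    simp only [hstart', hx', Function.update_self]
    have hsplit : (Finset.univ.filter fun i : Fin τ => s₀ ≤ (i : ℕ))
        = insert cell (Finset.univ.filter fun i : Fin τ => s₀ + 1 ≤ (i : ℕ)) := by
      ext i
      simp only [Finset.mem_filter, Finset.mem_univ, true_and, Finset.mem_insert, hcell,
        Fin.ext_iff]
      omega
    have hnotmem : cell ∉ Finset.univ.filter fun i : Fin τ => s₀ + 1 ≤ (i : ℕ) := by
      simp [hcell]
    rw [hsplit, Finset.sum_insert hnotmem]
    have hc1 : trajA (G n₀) η τ s₀ x₀ ((cell : Fin τ) : ℕ) (Function.update (ω n₀) cell z)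
        = x₀ := trajA_of_le _ _ _ _ _ (le_refl s₀) _
    rw [hc1, Function.update_self]
    congr 1
    refine Finset.sum_congr rfl fun i hi => ?_
    have hi' : s₀ + 1 ≤ (i : ℕ) := (Finset.mem_filter.mp hi).2
    have hne : i ≠ cell := by
      intro h; rw [h] at hi'; simp [hcell] at hi'
    have hshift := trajA_shift (G n₀) η τ s₀ x₀ hn₀ z (ω n₀) (i : ℕ) hi'
    rw [Function.update_of_ne hne]
    rw [show Function.update (ω n₀) cell z = Function.update (ω n₀) ⟨s₀, hn₀⟩ z from rfl,
      hshift]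
  -- now assemble
  show ‖v + ∑ n, a n • T n‖ ^ 2 = ‖v + a n₀ • w₀ + ∑ n, a n • T' n‖ ^ 2
  congr 2
  rw [← Finset.add_sum_erase _ (fun n => a n • T n) (Finset.mem_univ n₀),
    ← Finset.add_sum_erase _ (fun n => a n • T' n) (Finset.mem_univ n₀),
    Finset.sum_congr rfl (fun n hn => by
      rw [hTne n (Finset.ne_of_mem_erase hn)]), hTn₀, smul_add]
  abel

theorem integrable_sqrt_of_integrable {α : Type*} [MeasurableSpace α] {μ : Measure α}
    [IsFiniteMeasure μ] {I : α → ℝ} (hI : Integrable I μ) :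
    Integrable (fun z => Real.sqrt (I z)) μ := by
  have hsm : AEStronglyMeasurable (fun z => Real.sqrt (I z)) μ :=
    Real.continuous_sqrt.comp_aestronglyMeasurable hI.aestronglyMeasurable
  refine Integrable.mono' ((integrable_const (1:ℝ)).add hI.abs) hsm ?_
  filter_upwards with z
  rw [Real.norm_eq_abs, abs_of_nonneg (Real.sqrt_nonneg _)]
  exact sqrt_le_one_add _

set_option maxHeartbeats 2000000 in
theorem sgd_main {N : ℕ} {Z : Fin N → Type*} [∀ n, MeasurableSpace (Z n)]
    (ν : ∀ n, Measure (Z n)) [∀ n, IsProbabilityMeasure (ν n)]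
    {E : Type*} [NormedAddCommGroup E] [NormedSpace ℝ E] [MeasurableSpace E] [BorelSpace E]
    (G : ∀ n, E → Z n → E) (hG : ∀ n, Measurable (Function.uncurry (G n)))
    (D : Fin N → E → E) (σ : Fin N → ℝ)
    (hvar : ∀ n x, ∫ z, ‖G n x z - D n x‖ ^ 2 ∂ν n ≤ σ n ^ 2)
    (a : Fin N → ℝ) (ha : ∀ n, 0 ≤ a n) (η : ℝ) (τ : ℕ) :
    ∀ (R : ℕ) (start : Fin N → ℕ), (∑ n, (τ - start n)) = R → ∀ (x : Fin N → E) (v : E),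
      (∫ ω, fval G D a η τ start x v ω ∂(Measure.pi fun n => Measure.pi fun _ : Fin τ => ν n))
          ≤ (‖v‖ + ∑ n, a n * ((τ - start n : ℕ) : ℝ) * |σ n|) ^ 2
        ∧ (Integrable (fval G D a η τ start x v)
              (Measure.pi fun n => Measure.pi fun _ : Fin τ => ν n) →
            ‖v‖ ≤ Real.sqrt (∫ ω, fval G D a η τ start x v ω
                ∂(Measure.pi fun n => Measure.pi fun _ : Fin τ => ν n))
              + ∑ n, a n * ((τ - start n : ℕ) : ℝ) * |σ n|) := by
  classical
  intro R
  induction R with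
  | zero =>
      intro start hR x v
      have hz : ∀ n, τ - start n = 0 := by
        intro n
        have h2 : τ - start n ≤ ∑ m, (τ - start m) :=
          Finset.single_le_sum (f := fun m => τ - start m)
            (fun i _ => Nat.zero_le _) (Finset.mem_univ n)
        omega
      have hfil : ∀ n, (Finset.univ.filter fun i : Fin τ => start n ≤ (i : ℕ)) = ∅ := by
        intro n
        refine Finset.filter_eq_empty_iff.mpr fun i _ => ?_
        have h3 := i.isLt
        have h4 := hz n
        omega
      have hfv : ∀ ω : ∀ n, Fin τ → Z n, fval G D a η τ start x v ω = ‖v‖ ^ 2 := by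
        intro ω
        unfold fval
        simp only [hfil, Finset.sum_empty, smul_zero, Finset.sum_const_zero, add_zero]
      have hβ0 : (∑ n, a n * ((τ - start n : ℕ) : ℝ) * |σ n|) = 0 :=
        Finset.sum_eq_zero fun n _ => by rw [hz n]; simp
      have hIconst : (∫ ω, fval G D a η τ start x v ω
          ∂(Measure.pi fun n => Measure.pi fun _ : Fin τ => ν n)) = ‖v‖ ^ 2 := by
        simp only [hfv]
        simp
      constructor
      · rw [hIconst, hβ0, add_zero]
      · intro _
        rw [hIconst, hβ0, add_zero, Real.sqrt_sq (norm_nonneg v)]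
  | succ R IH =>
      intro start hR x v
      set P : Measure (∀ n, Fin τ → Z n) :=
        Measure.pi fun n => Measure.pi fun _ : Fin τ => ν n with hP
      have hex : ∃ n, start n < τ := by
        by_contra h
        push_neg at h
        have h0 : ∑ n, (τ - start n) = 0 := Finset.sum_eq_zero fun n _ => by
          have := h n; omega
        omega
      obtain ⟨n₀, hn₀⟩ := hex
      set cell : Fin τ := ⟨start n₀, hn₀⟩ with hcell
      set start' := Function.update start n₀ (start n₀ + 1) with hstart'
      set x' : Z n₀ → Fin N → E :=
        fun z => Function.update x n₀ (x n₀ - η • G n₀ (x n₀) z) with hx'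
      set v' : Z n₀ → E := fun z => v + a n₀ • (G n₀ (x n₀) z - D n₀ (x n₀)) with hv'
      set q₀ : Z n₀ → ℝ := fun z => ‖G n₀ (x n₀) z - D n₀ (x n₀)‖ with hq₀def
      have hq₀nn : ∀ z, 0 ≤ q₀ z := fun z => norm_nonneg _
      have hq₀m : Measurable q₀ := by
        have h1 : Measurable fun z : Z n₀ => G n₀ (x n₀) z :=
          (hG n₀).comp (measurable_const.prodMk measurable_id)
        have h2 : Continuous fun u : E => ‖u - D n₀ (x n₀)‖ :=
          (continuous_sub_right _).norm
        exact h2.measurable.comp h1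
      have hsum' : ∑ n, (τ - start' n) = R := by
        have h1 : ∀ n ∈ Finset.univ.erase n₀, τ - start' n = τ - start n := fun n hn => by
          rw [hstart', Function.update_of_ne (Finset.ne_of_mem_erase hn)]
        rw [← Finset.add_sum_erase _ _ (Finset.mem_univ n₀), Finset.sum_congr rfl h1,
          hstart', Function.update_self]
        rw [← Finset.add_sum_erase _ (fun n => τ - start n) (Finset.mem_univ n₀)] at hR
        omega
      set β : ℝ := ∑ n, a n * ((τ - start n : ℕ) : ℝ) * |σ n| with hβ
      set β' : ℝ := ∑ n, a n * ((τ - start' n : ℕ) : ℝ) * |σ n| with hβ'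
      have hβ'0 : 0 ≤ β' := Finset.sum_nonneg fun n _ =>
        mul_nonneg (mul_nonneg (ha n) (Nat.cast_nonneg _)) (abs_nonneg _)
      have hββ' : β = β' + a n₀ * |σ n₀| := by
        have h1 : ∀ n ∈ Finset.univ.erase n₀,
            a n * ((τ - start' n : ℕ) : ℝ) * |σ n| = a n * ((τ - start n : ℕ) : ℝ) * |σ n| :=
          fun n hn => by rw [hstart', Function.update_of_ne (Finset.ne_of_mem_erase hn)]
        rw [hβ, hβ', ← Finset.add_sum_erase _ _ (Finset.mem_univ n₀),
          ← Finset.add_sum_erase _ (fun n => a n * ((τ - start' n : ℕ) : ℝ) * |σ n|)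
            (Finset.mem_univ n₀), Finset.sum_congr rfl h1, hstart', Function.update_self]
        have hc : ((τ - start n₀ : ℕ) : ℝ) = ((τ - (start n₀ + 1) : ℕ) : ℝ) + 1 := by
          have h2 : τ - start n₀ = (τ - (start n₀ + 1)) + 1 := by omega
          rw [h2]; push_cast; ring
        rw [hc]; ring
      by_cases hInt : Integrable (fval G D a η τ start x v) P
      · -- integrable case
        set Φ : Z n₀ × (∀ n, Fin τ → Z n) → (∀ n, Fin τ → Z n) := fun p =>
          Function.update p.2 n₀ (Function.update (p.2 n₀) cell p.1) with hΦ
        have hmp : MeasurePreserving Φ ((ν n₀).prod P) P :=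
          measurePreserving_updateCell ν n₀ cell
        set F : Z n₀ × (∀ n, Fin τ → Z n) → ℝ :=
          fun p => fval G D a η τ start' (x' p.1) (v' p.1) p.2 with hF
        have hkeyfun : (fval G D a η τ start x v) ∘ Φ = F := by
          funext p
          exact fval_update G D a η τ start x v n₀ hn₀ p.1 p.2
        have hFint : Integrable F ((ν n₀).prod P) := by
          rw [← hkeyfun]
          exact (hmp.integrable_comp hInt.aestronglyMeasurable).mpr hInt
        have hIeq : (∫ ω, fval G D a η τ start x v ω ∂P)
            = ∫ p, F p ∂((ν n₀).prod P) := by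
          conv_lhs => rw [← hmp.map_eq]
          rw [integral_map hmp.measurable.aemeasurable
            (by rw [hmp.map_eq]; exact hInt.aestronglyMeasurable)]
          rw [← hkeyfun]
          rfl
        set I : Z n₀ → ℝ := fun z => ∫ ω, fval G D a η τ start' (x' z) (v' z) ω ∂P with hI
        have hFub : (∫ p, F p ∂((ν n₀).prod P)) = ∫ z, I z ∂ν n₀ :=
          integral_prod F hFint
        have hInn : ∀ z, 0 ≤ I z := fun z =>
          integral_nonneg fun ω => fval_nonneg G D a η τ start' (x' z) (v' z) ω
        have hIint : Integrable I (ν n₀) := hFint.integral_prod_left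
        have hup : ∀ z, I z ≤ (‖v' z‖ + β') ^ 2 := fun z =>
          (IH start' hsum' (x' z) (v' z)).1
        have hsec : ∀ᵐ z ∂ν n₀, Integrable (fval G D a η τ start' (x' z) (v' z)) P :=
          hFint.prod_right_ae
        have hco : ∀ᵐ z ∂ν n₀, ‖v' z‖ ≤ Real.sqrt (I z) + β' := by
          filter_upwards [hsec] with z hz
          exact (IH start' hsum' (x' z) (v' z)).2 hz
        have htri : ∀ z, a n₀ * q₀ z ≤ ‖v' z‖ + ‖v‖ := by
          intro z
          have h1 : a n₀ • (G n₀ (x n₀) z - D n₀ (x n₀)) = v' z - v := by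
            simp only [hv']; abel
          calc a n₀ * q₀ z = ‖a n₀ • (G n₀ (x n₀) z - D n₀ (x n₀))‖ := by
                rw [norm_smul, Real.norm_eq_abs, abs_of_nonneg (ha n₀)]
            _ = ‖v' z - v‖ := by rw [h1]
            _ ≤ ‖v' z‖ + ‖v‖ := norm_sub_le _ _
        have htri2 : ∀ z, ‖v' z‖ ≤ ‖v‖ + a n₀ * q₀ z := by
          intro z
          calc ‖v' z‖ ≤ ‖v‖ + ‖a n₀ • (G n₀ (x n₀) z - D n₀ (x n₀))‖ := norm_add_le _ _
            _ = ‖v‖ + a n₀ * q₀ z := by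
                rw [norm_smul, Real.norm_eq_abs, abs_of_nonneg (ha n₀)]
        by_cases ha₀ : a n₀ = 0
        · -- trivial client
          have hv'v : ∀ z, v' z = v := fun z => by simp only [hv', ha₀, zero_smul, add_zero]
          have hβeq : β = β' := by rw [hββ', ha₀]; ring
          constructor
          · rw [hIeq, hFub]
            calc (∫ z, I z ∂ν n₀) ≤ ∫ _z, (‖v‖ + β') ^ 2 ∂ν n₀ := by
                  refine integral_mono_of_nonneg (Filter.Eventually.of_forall hInn)
                    (integrable_const _) (Filter.Eventually.of_forall fun z => ?_)
                  have := hup z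
                  rwa [hv'v z] at this
              _ = (‖v‖ + β') ^ 2 := by simp
              _ = (‖v‖ + β) ^ 2 := by rw [hβeq]
          · intro _
            have hsqrtint : Integrable (fun z => Real.sqrt (I z)) (ν n₀) :=
              integrable_sqrt_of_integrable hIint
            have h5 : ‖v‖ ≤ ∫ z, (Real.sqrt (I z) + β') ∂ν n₀ := by
              have h6 : (∫ _z, ‖v‖ ∂ν n₀) = ‖v‖ := by simp
              rw [← h6]
              refine integral_mono_ae (integrable_const _)
                (hsqrtint.add (integrable_const _)) ?_
              filter_upwards [hco] with z hz
              rw [← hv'v z]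
              exact hz
            have h7 : (∫ z, (Real.sqrt (I z) + β') ∂ν n₀)
                = (∫ z, Real.sqrt (I z) ∂ν n₀) + β' := by
              rw [integral_add hsqrtint (integrable_const _)]
              simp
            have h8 : (∫ z, Real.sqrt (I z) ∂ν n₀) ≤ Real.sqrt (∫ z, I z ∂ν n₀) :=
              integral_sqrt_le (ν n₀) hIint (Filter.Eventually.of_forall hInn)
            rw [hIeq, hFub, hβeq]
            linarith
        · -- a n₀ > 0
          have ha₀' : 0 < a n₀ := lt_of_le_of_ne (ha n₀) (Ne.symm ha₀)
          have hq2bound : ∀ᵐ z ∂ν n₀,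
              q₀ z ^ 2 ≤ (2 / a n₀ ^ 2) * I z + (2 / a n₀ ^ 2) * (β' + ‖v‖) ^ 2 := by
            filter_upwards [hco] with z hz
            have h2 : a n₀ * q₀ z ≤ Real.sqrt (I z) + (β' + ‖v‖) := by
              have := htri z
              linarith
            have hs := Real.sq_sqrt (hInn z)
            have hq0 := hq₀nn z
            have hsn := Real.sqrt_nonneg (I z)
            have hK : 0 ≤ β' + ‖v‖ := by positivity
            have hz2 : 0 ≤ a n₀ * q₀ z := mul_nonneg (ha n₀) hq0
            have hz3 : 0 ≤ Real.sqrt (I z) + (β' + ‖v‖) := add_nonneg hsn hK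
            have h3' : (a n₀ * q₀ z) * (a n₀ * q₀ z)
                ≤ (Real.sqrt (I z) + (β' + ‖v‖)) * (Real.sqrt (I z) + (β' + ‖v‖)) :=
              mul_le_mul h2 h2 hz2 hz3
            have h3 : (a n₀ * q₀ z) ^ 2 ≤ 2 * I z + 2 * (β' + ‖v‖) ^ 2 := by
              nlinarith [sq_nonneg (Real.sqrt (I z) - (β' + ‖v‖))]
            have ha2 : 0 < a n₀ ^ 2 := by positivity
            rw [div_mul_eq_mul_div, div_mul_eq_mul_div, ← add_div, le_div_iff₀ ha2]
            nlinarith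
          have hq2int : Integrable (fun z => q₀ z ^ 2) (ν n₀) := by
            refine Integrable.mono' ((hIint.const_mul (2 / a n₀ ^ 2)).add
              (integrable_const ((2 / a n₀ ^ 2) * (β' + ‖v‖) ^ 2)))
              ((hq₀m.pow_const 2).aestronglyMeasurable) ?_
            filter_upwards [hq2bound] with z hz
            rw [Real.norm_eq_abs, abs_of_nonneg (sq_nonneg _)]
            simpa only [Pi.add_apply] using hz
          have hq2 : (∫ z, q₀ z ^ 2 ∂ν n₀) ≤ σ n₀ ^ 2 := hvar n₀ (x n₀)
          have hq1int : Integrable q₀ (ν n₀) := by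
            refine Integrable.mono' ((integrable_const (1 : ℝ)).add hq2int)
              hq₀m.aestronglyMeasurable ?_
            filter_upwards with z
            rw [Real.norm_eq_abs, abs_of_nonneg (hq₀nn z)]
            simp only [Pi.add_apply]
            nlinarith [hq₀nn z, sq_nonneg (q₀ z - 1)]
          have hq1 : (∫ z, q₀ z ∂ν n₀) ≤ |σ n₀| := by
            have h2 : (∫ z, Real.sqrt (q₀ z ^ 2) ∂ν n₀) ≤ Real.sqrt (∫ z, q₀ z ^ 2 ∂ν n₀) :=
              integral_sqrt_le (ν n₀) hq2int (Filter.Eventually.of_forall fun z => sq_nonneg _)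
            have h3 : (fun z => Real.sqrt (q₀ z ^ 2)) = q₀ := by
              funext z; rw [Real.sqrt_sq (hq₀nn z)]
            rw [h3] at h2
            have h4 : Real.sqrt (∫ z, q₀ z ^ 2 ∂ν n₀) ≤ Real.sqrt (σ n₀ ^ 2) :=
              Real.sqrt_le_sqrt hq2
            rw [Real.sqrt_sq_eq_abs] at h4
            linarith
          have hq1nn : 0 ≤ ∫ z, q₀ z ∂ν n₀ := integral_nonneg hq₀nn
          constructor
          · -- upper bound
            rw [hIeq, hFub]
            have hexp : (fun z => ((‖v‖ + β') + a n₀ * q₀ z) ^ 2)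
                = fun z => ((‖v‖ + β') ^ 2 + (2 * (‖v‖ + β') * a n₀) * q₀ z)
                    + a n₀ ^ 2 * q₀ z ^ 2 := by
              funext z; ring
            have hbint : Integrable (fun z => ((‖v‖ + β') + a n₀ * q₀ z) ^ 2) (ν n₀) := by
              rw [hexp]
              exact ((integrable_const _).add (hq1int.const_mul _)).add (hq2int.const_mul _)
            have hmono : ∀ z, I z ≤ ((‖v‖ + β') + a n₀ * q₀ z) ^ 2 := by
              intro z
              refine le_trans (hup z) ?_
              have h4 := htri2 z
              have h5 : 0 ≤ ‖v' z‖ := norm_nonneg _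
              have h6 : 0 ≤ a n₀ * q₀ z := by positivity
              nlinarith
            calc (∫ z, I z ∂ν n₀) ≤ ∫ z, ((‖v‖ + β') + a n₀ * q₀ z) ^ 2 ∂ν n₀ :=
                  integral_mono_of_nonneg (Filter.Eventually.of_forall hInn) hbint
                    (Filter.Eventually.of_forall hmono)
              _ = ((‖v‖ + β') ^ 2 + (2 * (‖v‖ + β') * a n₀) * ∫ z, q₀ z ∂ν n₀)
                    + a n₀ ^ 2 * ∫ z, q₀ z ^ 2 ∂ν n₀ := by
                  rw [hexp,
                    integral_add (f := fun z => (‖v‖ + β') ^ 2 + (2 * (‖v‖ + β') * a n₀) * q₀ z)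
                      (g := fun z => a n₀ ^ 2 * q₀ z ^ 2)
                      ((integrable_const _).add (hq1int.const_mul _)) (hq2int.const_mul _),
                    integral_add (f := fun _ => (‖v‖ + β') ^ 2)
                      (g := fun z => (2 * (‖v‖ + β') * a n₀) * q₀ z)
                      (integrable_const _) (hq1int.const_mul _),
                    integral_const_mul, integral_const_mul, integral_const]
                  simp
              _ ≤ ((‖v‖ + β') ^ 2 + (2 * (‖v‖ + β') * a n₀) * |σ n₀|)
                    + a n₀ ^ 2 * σ n₀ ^ 2 := by
                  have hc1 : 0 ≤ 2 * (‖v‖ + β') * a n₀ := by positivity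
                  have hc2 : (2 * (‖v‖ + β') * a n₀) * (∫ z, q₀ z ∂ν n₀)
                      ≤ (2 * (‖v‖ + β') * a n₀) * |σ n₀| :=
                    mul_le_mul_of_nonneg_left hq1 hc1
                  have hc3 : a n₀ ^ 2 * (∫ z, q₀ z ^ 2 ∂ν n₀) ≤ a n₀ ^ 2 * σ n₀ ^ 2 :=
                    mul_le_mul_of_nonneg_left hq2 (sq_nonneg _)
                  linarith
              _ = ((‖v‖ + β') + a n₀ * |σ n₀|) ^ 2 := by
                  have habs : |σ n₀| ^ 2 = σ n₀ ^ 2 := sq_abs _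
                  nlinarith [habs]
              _ = (‖v‖ + β) ^ 2 := by rw [hββ']; ring_nf
          · -- coercivity
            intro _
            have hsqrtint : Integrable (fun z => Real.sqrt (I z)) (ν n₀) :=
              integrable_sqrt_of_integrable hIint
            have hpt : ∀ᵐ z ∂ν n₀, ‖v‖ ≤ Real.sqrt (I z) + β' + a n₀ * q₀ z := by
              filter_upwards [hco] with z hz
              have h1 : ‖v‖ ≤ ‖v' z‖ + a n₀ * q₀ z := by
                have h2 : v = v' z - a n₀ • (G n₀ (x n₀) z - D n₀ (x n₀)) := by
                  simp only [hv']; abel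
                calc ‖v‖ = ‖v' z - a n₀ • (G n₀ (x n₀) z - D n₀ (x n₀))‖ := by rw [← h2]
                  _ ≤ ‖v' z‖ + ‖a n₀ • (G n₀ (x n₀) z - D n₀ (x n₀))‖ := norm_sub_le _ _
                  _ = ‖v' z‖ + a n₀ * q₀ z := by
                      rw [norm_smul, Real.norm_eq_abs, abs_of_nonneg (ha n₀)]
              linarith
            have hrhsint : Integrable
                (fun z => Real.sqrt (I z) + β' + a n₀ * q₀ z) (ν n₀) :=
              (hsqrtint.add (integrable_const _)).add (hq1int.const_mul _)
            have h5 : ‖v‖ ≤ ∫ z, (Real.sqrt (I z) + β' + a n₀ * q₀ z) ∂ν n₀ := by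
              have h6 : (∫ _z, ‖v‖ ∂ν n₀) = ‖v‖ := by simp
              rw [← h6]
              exact integral_mono_ae (integrable_const _) hrhsint hpt
            have h7 : (∫ z, (Real.sqrt (I z) + β' + a n₀ * q₀ z) ∂ν n₀)
                = ((∫ z, Real.sqrt (I z) ∂ν n₀) + β') + a n₀ * ∫ z, q₀ z ∂ν n₀ := by
              rw [integral_add (f := fun z => Real.sqrt (I z) + β')
                  (g := fun z => a n₀ * q₀ z)
                  (hsqrtint.add (integrable_const _)) (hq1int.const_mul _),
                integral_add (f := fun z => Real.sqrt (I z)) (g := fun _ => β')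
                  hsqrtint (integrable_const _), integral_const_mul, integral_const]
              simp
            have h8 : (∫ z, Real.sqrt (I z) ∂ν n₀) ≤ Real.sqrt (∫ z, I z ∂ν n₀) :=
              integral_sqrt_le (ν n₀) hIint (Filter.Eventually.of_forall hInn)
            have h9 : a n₀ * (∫ z, q₀ z ∂ν n₀) ≤ a n₀ * |σ n₀| :=
              mul_le_mul_of_nonneg_left hq1 (ha n₀)
            rw [hIeq, hFub, hββ']
            linarith
      · -- non-integrable case
        constructor
        · rw [integral_undef hInt]
          positivity
        · intro h
          exact absurd h hInt

end SGDAux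

open SGDAux in
/-- Aggregated gradient-noise bound (step in the proof of Lemma C.1). -/
theorem stmt_10 {E : Type*} [NormedAddCommGroup E] [InnerProductSpace ℝ E] [CompleteSpace E]
    [MeasurableSpace E] [BorelSpace E]
    (N : ℕ) {Z : Fin N → Type*} [∀ n, MeasurableSpace (Z n)]
    (ν : ∀ n, Measure (Z n)) [∀ n, IsProbabilityMeasure (ν n)]
    (F : Fin N → E → ℝ) (S : ℝ) (σ : Fin N → ℝ) (G : ℝ)
    (hdiff : ∀ n, Differentiable ℝ (F n))
    (hlip : ∀ n (a b : E), ‖gradient (F n) a - gradient (F n) b‖ ≤ S * ‖a - b‖)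
    (g : ∀ n, E → Z n → E) (hgmeas : ∀ n, Measurable (Function.uncurry (g n)))
    (hmean : ∀ n (a : E), ∫ z, g n a z ∂(ν n) = gradient (F n) a)
    (hvar : ∀ n (a : E), ∫ z, ‖g n a z - gradient (F n) a‖ ^ 2 ∂(ν n) ≤ (σ n) ^ 2)
    (hsecond : ∀ n (a : E), ∫ z, ‖g n a z‖ ^ 2 ∂(ν n) ≤ G ^ 2)
    (a : Fin N → ℝ) (ha : ∀ n, 0 ≤ a n) (hsum : ∑ n, a n = 1)
    (τ : ℕ) (η : ℝ) (hη : 0 ≤ η)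
    (x0 : E) (X : Fin N → ℕ → ((n : Fin N) → Fin τ → Z n) → E)
    (hX0 : ∀ n ω, X n 0 ω = x0)
    (hXrec : ∀ n (i : ℕ) (hi : i < τ) ω,
      X n (i + 1) ω = X n i ω - η • g n (X n i ω) (ω n ⟨i, hi⟩)) :
    ∫ ω, ‖∑ n, a n • ∑ i : Fin τ,
          (g n (X n i.1 ω) (ω n i) - gradient (F n) (X n i.1 ω))‖ ^ 2
        ∂(Measure.pi fun n => Measure.pi fun _ : Fin τ => ν n) ≤
      N * (τ : ℝ) ^ 2 * ∑ n, (a n) ^ 2 * (σ n) ^ 2 := by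
  classical
  have hXtraj : ∀ (n : Fin N) (j : ℕ), j ≤ τ →
      ∀ ω : (n : Fin N) → Fin τ → Z n, X n j ω = trajA (g n) η τ 0 x0 j (ω n) := by
    intro n j
    induction j with
    | zero => intro _ ω; rw [hX0]; rfl
    | succ j ih =>
        intro hj ω
        have hjτ : j < τ := hj
        rw [hXrec n j hjτ ω, ih (le_of_lt hjτ) ω]
        show _ = trajA (g n) η τ 0 x0 (j + 1) (ω n)
        rw [trajA, dif_pos ⟨Nat.zero_le _, hjτ⟩]
  have key := (sgd_main ν g hgmeas (fun n => gradient (F n)) σ (fun n x => hvar n x)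
      a ha η τ (∑ n : Fin N, (τ - (0 : ℕ))) (fun _ => 0) rfl (fun _ => x0) 0).1
  have hint_eq : ∀ ω : (n : Fin N) → Fin τ → Z n,
      ‖∑ n, a n • ∑ i : Fin τ,
          (g n (X n i.1 ω) (ω n i) - gradient (F n) (X n i.1 ω))‖ ^ 2
        = fval g (fun n => gradient (F n)) a η τ (fun _ => 0) (fun _ => x0) 0 ω := by
    intro ω
    unfold fval
    rw [zero_add]
    refine congrArg (fun u : E => ‖u‖ ^ 2) ?_
    refine Finset.sum_congr rfl fun n _ => ?_
    refine congrArg (fun u : E => a n • u) ?_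
    rw [show (Finset.univ.filter fun i : Fin τ => (0 : ℕ) ≤ (i : ℕ)) = Finset.univ from
      Finset.filter_true_of_mem fun i _ => Nat.zero_le _]
    refine Finset.sum_congr rfl fun i _ => ?_
    rw [hXtraj n i.1 (le_of_lt i.isLt) ω]
  have hLHS : (∫ ω, ‖∑ n, a n • ∑ i : Fin τ,
          (g n (X n i.1 ω) (ω n i) - gradient (F n) (X n i.1 ω))‖ ^ 2
        ∂(Measure.pi fun n => Measure.pi fun _ : Fin τ => ν n))
      = ∫ ω, fval g (fun n => gradient (F n)) a η τ (fun _ => 0) (fun _ => x0) 0 ω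
        ∂(Measure.pi fun n => Measure.pi fun _ : Fin τ => ν n) := by
    simp only [hint_eq]
  rw [hLHS]
  refine le_trans key ?_
  rw [norm_zero, zero_add]
  have h1 : (∑ n, a n * ((τ - 0 : ℕ) : ℝ) * |σ n|) ^ 2
      ≤ ((Finset.univ : Finset (Fin N)).card : ℝ)
          * ∑ n, (a n * ((τ - 0 : ℕ) : ℝ) * |σ n|) ^ 2 :=
    sq_sum_le_card_mul_sum_sq
  have hcard : ((Finset.univ : Finset (Fin N)).card : ℝ) = (N : ℝ) := by
    rw [Finset.card_univ, Fintype.card_fin]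
  have h2 : ∀ n : Fin N, (a n * ((τ - 0 : ℕ) : ℝ) * |σ n|) ^ 2
      = (τ : ℝ) ^ 2 * (a n ^ 2 * σ n ^ 2) := by
    intro n
    rw [Nat.sub_zero]
    have habs : |σ n| ^ 2 = σ n ^ 2 := sq_abs _
    linear_combination (a n) ^ 2 * (τ : ℝ) ^ 2 * habs
  calc (∑ n, a n * ((τ - 0 : ℕ) : ℝ) * |σ n|) ^ 2
      ≤ ((Finset.univ : Finset (Fin N)).card : ℝ)
          * ∑ n, (a n * ((τ - 0 : ℕ) : ℝ) * |σ n|) ^ 2 := h1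
    _ = (N : ℝ) * ∑ n, (τ : ℝ) ^ 2 * (a n ^ 2 * σ n ^ 2) := by
        rw [hcard, Finset.sum_congr rfl fun n _ => h2 n]
    _ = N * (τ : ℝ) ^ 2 * ∑ n, (a n) ^ 2 * (σ n) ^ 2 := by
        rw [← Finset.mul_sum]
        ring
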